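/- Let R₁ and R₂ be finite integral domains and R = R₁ × R₂. Then the complement of the zero-divisor graph of R is a divisor graph; in fact it is a disjoint union of two complete graphs. -/

import Mathlib

/-- A finite simple graph is a *divisor graph* if there is an injection from its
vertices to the positive integers such that distinct vertices are adjacent iff
one label divides the other. -/
def IsDivisorGraph {V : Type*} (G : SimpleGraph V) : Prop :=
  ∃ f : V → ℕ, Function.Injective f ∧ (∀ v, 0 < f v) ∧
    ∀ u v : V, u ≠ v → (G.Adj u v ↔ f u ∣ f v ∨ f v ∣ f u)

/-- The vertex set of the zero-divisor graph: nonzero zero-divisors of `R`. -/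
abbrev ZDVertex (R : Type*) [CommRing R] : Type _ :=
  {a : R // a ≠ 0 ∧ ∃ b : R, b ≠ 0 ∧ a * b = 0}

/-- The zero-divisor graph `Γ(R)`. -/
def zeroDivisorGraph (R : Type*) [CommRing R] : SimpleGraph (ZDVertex R) where
  Adj x y := x ≠ y ∧ x.val * y.val = 0
  symm := ⟨fun x y ⟨h1, h2⟩ => ⟨h1.symm, by rwa [mul_comm]⟩⟩
  loopless := ⟨fun x ⟨h, _⟩ => h rfl⟩

/-- The complement of the zero-divisor graph `Γ(R)̄`. -/
def compZDGraph (R : Type*) [CommRing R] : SimpleGraph (ZDVertex R) where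
  Adj x y := x ≠ y ∧ x.val * y.val ≠ 0
  symm := ⟨fun x y ⟨h1, h2⟩ => ⟨h1.symm, by rwa [mul_comm]⟩⟩
  loopless := ⟨fun x ⟨h, _⟩ => h rfl⟩

section Aux

variable {R₁ R₂ : Type*} [CommRing R₁] [IsDomain R₁] [CommRing R₂] [IsDomain R₂]

lemma zd_classify (x : ZDVertex (R₁ × R₂)) :
    (x.val.1 = 0 ∧ x.val.2 ≠ 0) ∨ (x.val.2 = 0 ∧ x.val.1 ≠ 0) := by
  obtain ⟨hx0, b, hb0, hxb⟩ := x.prop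
  have h1 : x.val.1 * b.1 = 0 := congrArg Prod.fst hxb
  have h2 : x.val.2 * b.2 = 0 := congrArg Prod.snd hxb
  have hbne : b.1 ≠ 0 ∨ b.2 ≠ 0 := by
    by_contra h
    push_neg at h
    exact hb0 (Prod.ext h.1 h.2)
  have hxne : x.val.1 ≠ 0 ∨ x.val.2 ≠ 0 := by
    by_contra h
    push_neg at h
    exact hx0 (Prod.ext h.1 h.2)
  rcases hbne with hb | hb
  · have hx1 : x.val.1 = 0 := by
      rcases mul_eq_zero.mp h1 with h | h
      · exact h
      · exact absurd h hb
    left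
    refine ⟨hx1, ?_⟩
    rcases hxne with h | h
    · exact absurd hx1 h
    · exact h
  · have hx2 : x.val.2 = 0 := by
      rcases mul_eq_zero.mp h2 with h | h
      · exact h
      · exact absurd h hb
    right
    refine ⟨hx2, ?_⟩
    rcases hxne with h | h
    · exact h
    · exact absurd hx2 h

lemma zd_adj_iff (x y : ZDVertex (R₁ × R₂)) (hxy : x ≠ y) :
    (compZDGraph (R₁ × R₂)).Adj x y ↔
      (x.val.1 = 0 ∧ y.val.1 = 0) ∨ (x.val.2 = 0 ∧ y.val.2 = 0) := by
  have hx := zd_classify x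
  have hy := zd_classify y
  constructor
  · rintro ⟨-, hne⟩
    rcases hx with ⟨hx1, hx2⟩ | ⟨hx2, hx1⟩ <;> rcases hy with ⟨hy1, hy2⟩ | ⟨hy2, hy1⟩
    · exact Or.inl ⟨hx1, hy1⟩
    · exact absurd (Prod.ext (by simp [hx1]) (by simp [hy2])) hne
    · exact absurd (Prod.ext (by simp [hy1]) (by simp [hx2])) hne
    · exact Or.inr ⟨hx2, hy2⟩
  · rintro (⟨hx1, hy1⟩ | ⟨hx2, hy2⟩)
    · refine ⟨hxy, fun h => ?_⟩
      have h2 : x.val.2 * y.val.2 = 0 := congrArg Prod.snd h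
      have hx2 : x.val.2 ≠ 0 := by
        rcases hx with ⟨_, h⟩ | ⟨h, _⟩
        · exact h
        · exact absurd (Prod.ext hx1 h) x.prop.1
      have hy2 : y.val.2 ≠ 0 := by
        rcases hy with ⟨_, h⟩ | ⟨h, _⟩
        · exact h
        · exact absurd (Prod.ext hy1 h) y.prop.1
      rcases mul_eq_zero.mp h2 with h | h
      · exact hx2 h
      · exact hy2 h
    · refine ⟨hxy, fun h => ?_⟩
      have h1 : x.val.1 * y.val.1 = 0 := congrArg Prod.fst h
      have hx1 : x.val.1 ≠ 0 := by
        rcases hx with ⟨h, _⟩ | ⟨_, h⟩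
        · exact absurd (Prod.ext h hx2) x.prop.1
        · exact h
      have hy1 : y.val.1 ≠ 0 := by
        rcases hy with ⟨h, _⟩ | ⟨_, h⟩
        · exact absurd (Prod.ext h hy2) y.prop.1
        · exact h
      rcases mul_eq_zero.mp h1 with h | h
      · exact hx1 h
      · exact hy1 h

end Aux
theorem compZDGraph_prod_domains (R₁ R₂ : Type*) [CommRing R₁] [IsDomain R₁] [Fintype R₁]
    [CommRing R₂] [IsDomain R₂] [Fintype R₂] :
    IsDivisorGraph (compZDGraph (R₁ × R₂)) ∧
    ∀ x y : ZDVertex (R₁ × R₂), x ≠ y →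
      ((compZDGraph (R₁ × R₂)).Adj x y ↔
        (x.val.1 = 0 ∧ y.val.1 = 0) ∨ (x.val.2 = 0 ∧ y.val.2 = 0)) := by
  classical
  refine ⟨?_, fun x y hxy => zd_adj_iff x y hxy⟩
  obtain ⟨e, he⟩ := Countable.exists_injective_nat (ZDVertex (R₁ × R₂))
  refine ⟨fun v => if v.val.1 = 0 then 2 ^ (e v + 1) else 3 ^ (e v + 1), ?_, ?_, ?_⟩
  · intro u v h
    by_cases hu : u.val.1 = 0 <;> by_cases hv : v.val.1 = 0 <;> simp [hu, hv] at h
    · exact he h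
    · exfalso
      have h2 : (2 : ℕ) ∣ 3 ^ (e v + 1) := h ▸ dvd_pow_self 2 (Nat.succ_ne_zero _)
      have := Nat.Prime.dvd_of_dvd_pow Nat.prime_two h2
      norm_num at this
    · exfalso
      have h2 : (2 : ℕ) ∣ 3 ^ (e u + 1) := h.symm ▸ dvd_pow_self 2 (Nat.succ_ne_zero _)
      have := Nat.Prime.dvd_of_dvd_pow Nat.prime_two h2
      norm_num at this
    · exact he h
  · intro v
    by_cases hv : v.val.1 = 0 <;> simp [hv] <;> positivity
  · intro u v huv
    rw [zd_adj_iff u v huv]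
    have hu := zd_classify u
    have hv := zd_classify v
    constructor
    · rintro (⟨hu1, hv1⟩ | ⟨hu2, hv2⟩)
      · simp only [hu1, hv1, if_pos]
        rcases le_total (e u) (e v) with h | h
        · exact Or.inl (pow_dvd_pow 2 (by omega))
        · exact Or.inr (pow_dvd_pow 2 (by omega))
      · have hu1 : u.val.1 ≠ 0 := by
          rcases hu with ⟨_, h⟩ | ⟨_, h⟩
          · exact absurd hu2 h
          · exact h
        have hv1 : v.val.1 ≠ 0 := by
          rcases hv with ⟨_, h⟩ | ⟨_, h⟩
          · exact absurd hv2 h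
          · exact h
        simp only [hu1, hv1, if_neg]
        rcases le_total (e u) (e v) with h | h
        · exact Or.inl (pow_dvd_pow 3 (by omega))
        · exact Or.inr (pow_dvd_pow 3 (by omega))
    · intro h
      by_cases hu1 : u.val.1 = 0 <;> by_cases hv1 : v.val.1 = 0
      · exact Or.inl ⟨hu1, hv1⟩
      · exfalso
        simp only [hu1, hv1, if_pos, if_neg] at h
        rcases h with h | h
        · have := Nat.Prime.dvd_of_dvd_pow Nat.prime_two
            ((dvd_pow_self 2 (Nat.succ_ne_zero (e u))).trans h)
          norm_num at this
        · have := Nat.Prime.dvd_of_dvd_pow Nat.prime_three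
            ((dvd_pow_self 3 (Nat.succ_ne_zero (e v))).trans h)
          norm_num at this
      · exfalso
        simp only [hu1, hv1, if_pos, if_neg] at h
        rcases h with h | h
        · have := Nat.Prime.dvd_of_dvd_pow Nat.prime_three
            ((dvd_pow_self 3 (Nat.succ_ne_zero (e u))).trans h)
          norm_num at this
        · have := Nat.Prime.dvd_of_dvd_pow Nat.prime_two
            ((dvd_pow_self 2 (Nat.succ_ne_zero (e v))).trans h)
          norm_num at this
      · refine Or.inr ⟨?_, ?_⟩
        · rcases hu with ⟨h', _⟩ | ⟨h', _⟩
          · exact absurd h' hu1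
          · exact h'
        · rcases hv with ⟨h', _⟩ | ⟨h', _⟩
          · exact absurd h' hv1
          · exact h'
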